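/- A lattice has breadth at most two if and only if it contains no crown of order six as a subposet. -/

import Mathlib

lemma breadth_of_triple {L : Type*} [Lattice L]
    (h3 : ∀ x y z : L, x ⊔ y ⊔ z = x ⊔ y ∨ x ⊔ y ⊔ z = x ⊔ z ∨ x ⊔ y ⊔ z = y ⊔ z) :
    ∀ (S : Finset L) (hS : S.Nonempty), ∃ (S' : Finset L) (hS' : S'.Nonempty),
        S' ⊆ S ∧ S'.card ≤ 2 ∧ S'.sup' hS' id = S.sup' hS id := by
  intro S
  classical
  induction S using Finset.strongInduction with
  | _ S ih =>
    intro hS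
    by_cases hc : S.card ≤ 2
    · exact ⟨S, hS, subset_rfl, hc, rfl⟩
    · obtain ⟨x, hx⟩ := id hS
      have hne : (S.erase x).Nonempty := by
        rw [← Finset.card_pos, Finset.card_erase_of_mem hx]
        omega
      obtain ⟨S', hS', hsub, hcard, hsup⟩ := ih (S.erase x) (Finset.erase_ssubset hx) hne
      have hSsup : ∀ (h : S.Nonempty), S.sup' h id = x ⊔ (S.erase x).sup' hne id := by
        intro h
        rw [Finset.sup'_congr h (Finset.insert_erase hx).symm (fun _ _ => rfl),
          Finset.sup'_insert hne]
        rfl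
      interval_cases h : S'.card
      · simp [Finset.card_eq_zero] at h; exact absurd h (Finset.nonempty_iff_ne_empty.mp hS')
      · obtain ⟨u, hu⟩ := Finset.card_eq_one.mp h
        subst hu
        refine ⟨{x, u}, Finset.insert_nonempty _ _, ?_, Finset.card_le_two .., ?_⟩
        · intro t ht
          simp at ht
          rcases ht with rfl | rfl
          · exact hx
          · exact Finset.mem_of_mem_erase (hsub (by simp))
        · rw [hSsup, ← hsup]
          simp [Finset.sup'_insert]
      · obtain ⟨u, v, huv, hS'2⟩ := Finset.card_eq_two.mp h
        subst hS'2
        have hu : u ∈ S := Finset.mem_of_mem_erase (hsub (by simp))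
        have hv : v ∈ S := Finset.mem_of_mem_erase (hsub (by simp))
        have hsup2 : ∀ (h' : S.Nonempty), S.sup' h' id = x ⊔ u ⊔ v := by
          intro h'
          rw [hSsup h', ← hsup]
          simp [Finset.sup'_insert, sup_assoc]
          
        rcases h3 x u v with h' | h' | h'
        · refine ⟨{x, u}, Finset.insert_nonempty _ _, ?_, Finset.card_le_two .., ?_⟩
          · intro t ht; simp at ht; rcases ht with rfl | rfl <;> assumption
          · rw [hsup2, h']; simp [Finset.sup'_insert]
        · refine ⟨{x, v}, Finset.insert_nonempty _ _, ?_, Finset.card_le_two .., ?_⟩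
          · intro t ht; simp at ht; rcases ht with rfl | rfl <;> assumption
          · rw [hsup2, h']; simp [Finset.sup'_insert]
        · refine ⟨{u, v}, Finset.insert_nonempty _ _, ?_, Finset.card_le_two .., ?_⟩
          · intro t ht; simp at ht; rcases ht with rfl | rfl <;> assumption
          · rw [hsup2, h']; simp [Finset.sup'_insert]


lemma crown_of_bad {L : Type*} [Lattice L] (x y z : L)
    (hx : ¬ x ≤ y ⊔ z) (hy : ¬ y ≤ z ⊔ x) (hz : ¬ z ≤ x ⊔ y) :
    ∃ a b : Fin 3 → L,
        (∀ i j, a i ≤ b j ↔ (i = j ∨ i = j + 1)) ∧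
        (∀ i j, ¬ b i ≤ a j) ∧
        (∀ i j, i ≠ j → ¬ a i ≤ a j ∧ ¬ b i ≤ b j) := by
  refine ⟨![(x ⊔ y) ⊓ (z ⊔ x), (y ⊔ z) ⊓ (x ⊔ y), (z ⊔ x) ⊓ (y ⊔ z)],
    ![x ⊔ y, y ⊔ z, z ⊔ x], ?_, ?_, ?_⟩
  · intro i j
    fin_cases i <;> fin_cases j <;> simp [Fin.ext_iff] <;>
      (intro hle; first
        | exact hx ((le_inf le_sup_left le_sup_right).trans hle)
        | exact hy ((le_inf le_sup_left le_sup_right).trans hle)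
        | exact hz ((le_inf le_sup_left le_sup_right).trans hle))
  · intro i j hle
    fin_cases i <;> fin_cases j <;>
      simp at hle <;>
      first
        | exact hx hle | exact hy hle | exact hz hle
        | exact hx hle.1 | exact hy hle.1 | exact hz hle.1
        | exact hx hle.2 | exact hy hle.2 | exact hz hle.2
  · intro i j hij
    refine ⟨fun hle => ?_, fun hle => ?_⟩ <;>
      fin_cases i <;> fin_cases j <;>
      simp at hle <;>
      first
        | exact hij rfl
        | exact hx hle | exact hy hle | exact hz hle
        | exact hx hle.1 | exact hy hle.1 | exact hz hle.1
        | exact hx hle.2 | exact hy hle.2 | exact hz hle.2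
        | exact hx ((le_inf le_sup_left le_sup_right).trans hle)
        | exact hy ((le_inf le_sup_left le_sup_right).trans hle)
        | exact hz ((le_inf le_sup_left le_sup_right).trans hle)
        | exact hx ((le_inf le_sup_left le_sup_right).trans hle.1)
        | exact hy ((le_inf le_sup_left le_sup_right).trans hle.1)
        | exact hz ((le_inf le_sup_left le_sup_right).trans hle.1)
        | exact hx ((le_inf le_sup_left le_sup_right).trans hle.2)
        | exact hy ((le_inf le_sup_left le_sup_right).trans hle.2)
        | exact hz ((le_inf le_sup_left le_sup_right).trans hle.2)


theorem stmt15 {L : Type*} [Lattice L] :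
    (∀ (S : Finset L) (hS : S.Nonempty), ∃ (S' : Finset L) (hS' : S'.Nonempty),
        S' ⊆ S ∧ S'.card ≤ 2 ∧ S'.sup' hS' id = S.sup' hS id) ↔
      ¬ ∃ a b : Fin 3 → L,
        (∀ i j, a i ≤ b j ↔ (i = j ∨ i = j + 1)) ∧
        (∀ i j, ¬ b i ≤ a j) ∧
        (∀ i j, i ≠ j → ¬ a i ≤ a j ∧ ¬ b i ≤ b j) := by
  classical
  constructor
  · rintro h ⟨a, b, hab, hba, hinc⟩
    set S : Finset L := {a 0, a 1, a 2} with hSdef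
    have hS : S.Nonempty := ⟨a 0, by simp [hSdef]⟩
    have hmem : ∀ m : Fin 3, a m ∈ S := by
      intro m; fin_cases m <;> simp [hSdef]
    have hk : ∀ k : Fin 3, ¬ ((k + 2 : Fin 3) = k ∨ k + 2 = k + 1) := by decide
    have claim1 : ∀ i j : Fin 3, ∃ k, a i ⊔ a j ≤ b k := by
      intro i j
      fin_cases i <;> fin_cases j
      · exact ⟨0, sup_le ((hab 0 0).mpr (by decide)) ((hab 0 0).mpr (by decide))⟩
      · exact ⟨0, sup_le ((hab 0 0).mpr (by decide)) ((hab 1 0).mpr (by decide))⟩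
      · exact ⟨2, sup_le ((hab 0 2).mpr (by decide)) ((hab 2 2).mpr (by decide))⟩
      · exact ⟨0, sup_le ((hab 1 0).mpr (by decide)) ((hab 0 0).mpr (by decide))⟩
      · exact ⟨1, sup_le ((hab 1 1).mpr (by decide)) ((hab 1 1).mpr (by decide))⟩
      · exact ⟨1, sup_le ((hab 1 1).mpr (by decide)) ((hab 2 1).mpr (by decide))⟩
      · exact ⟨2, sup_le ((hab 2 2).mpr (by decide)) ((hab 0 2).mpr (by decide))⟩
      · exact ⟨1, sup_le ((hab 2 1).mpr (by decide)) ((hab 1 1).mpr (by decide))⟩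
      · exact ⟨2, sup_le ((hab 2 2).mpr (by decide)) ((hab 2 2).mpr (by decide))⟩
    obtain ⟨S', hS', hsub, hcard, hsupeq⟩ := h S hS
    -- find k with S'.sup' ≤ b k
    have : ∃ k, S'.sup' hS' id ≤ b k := by
      interval_cases hc : S'.card
      · simp [Finset.card_eq_zero] at hc
        exact absurd hc (Finset.nonempty_iff_ne_empty.mp hS')
      · obtain ⟨u, hu⟩ := Finset.card_eq_one.mp hc
        subst hu
        have hu' : u ∈ S := hsub (by simp)
        simp only [hSdef, Finset.mem_insert, Finset.mem_singleton] at hu'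
        rcases hu' with rfl | rfl | rfl
        · exact ⟨0, by simpa using (hab 0 0).mpr (by decide)⟩
        · exact ⟨1, by simpa using (hab 1 1).mpr (by decide)⟩
        · exact ⟨2, by simpa using (hab 2 2).mpr (by decide)⟩
      · obtain ⟨u, v, huv, hS'2⟩ := Finset.card_eq_two.mp hc
        subst hS'2
        have hu' : u ∈ S := hsub (by simp)
        have hv' : v ∈ S := hsub (by simp)
        simp only [hSdef, Finset.mem_insert, Finset.mem_singleton] at hu' hv'
        have hsups : ({u, v} : Finset L).sup' hS' id = u ⊔ v := by
          simp [Finset.sup'_insert]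
        rcases hu' with rfl | rfl | rfl <;> rcases hv' with rfl | rfl | rfl <;>
          · obtain ⟨k, hk'⟩ := claim1 _ _
            exact ⟨k, hsups ▸ hk'⟩
    obtain ⟨k, hbk⟩ := this
    have h1 : a (k + 2) ≤ b k := by
      have h2 : a (k + 2) ≤ S.sup' hS id := Finset.le_sup' id (hmem (k + 2))
      rw [← hsupeq] at h2
      exact h2.trans hbk
    exact hk k ((hab _ _).mp h1)
  · intro hno S hS
    refine breadth_of_triple ?_ S hS
    intro x y z
    by_contra hcon
    push_neg at hcon
    obtain ⟨h1, h2, h3⟩ := hcon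
    refine hno (crown_of_bad x y z ?_ ?_ ?_)
    · intro hle
      exact h3 (by rw [sup_assoc, sup_eq_right.mpr hle])
    · intro hle
      refine h2 ?_
      rw [sup_right_comm, sup_eq_left.mpr (hle.trans (by rw [sup_comm]))]
    · intro hle
      exact h1 (by rw [sup_eq_left.mpr hle])
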